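/- Let a, p₀, p₁, p₂ be polynomials over ℂ with a ≠ 0, p₀ squarefree of positive degree, and suppose p₀, p₁, p₂ have no common root, i.e. there is no x ∈ ℂ with p₀(x) = p₁(x) = p₂(x) = 0. If a divides the Wronskian W(p₀,p₁) = p₀·p₁' − p₁·p₀' and a divides W(p₀,p₂) = p₀·p₂' − p₂·p₀', then a and p₀ are coprime (IsCoprime a p₀). -/
import Mathlib

open Polynomial

/-- The coprimality claim in the proof of Proposition 3.1: if `a ≠ 0`, `p₀` is
squarefree of positive degree, `p₀`, `p₁`, `p₂` have no common root, and `a` divides the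
Wronskians `W(p₀,p₁)` and `W(p₀,p₂)`, then `a` and `p₀` are coprime. -/
theorem ramification_divisor_coprime (a p₀ p₁ p₂ : Polynomial ℂ) (ha : a ≠ 0)
    (hp₀sq : Squarefree p₀) (hp₀deg : 0 < p₀.degree)
    (hnocommon : ¬ ∃ x : ℂ, p₀.eval x = 0 ∧ p₁.eval x = 0 ∧ p₂.eval x = 0)
    (h1 : a ∣ p₀ * derivative p₁ - p₁ * derivative p₀)
    (h2 : a ∣ p₀ * derivative p₂ - p₂ * derivative p₀) :
    IsCoprime a p₀ := by
  rw [Polynomial.isCoprime_iff_aeval_ne_zero_of_isAlgClosed (k := ℂ) ℂ a p₀]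
  intro x
  by_contra hcon
  push_neg at hcon
  obtain ⟨hax, hp₀x⟩ := hcon
  simp only [aeval_def, eval₂_eq_eval_map, Algebra.algebraMap_self, Polynomial.map_id] at hax hp₀x
  -- derivative nonzero at x
  have hsep : p₀.Separable := (PerfectField.separable_iff_squarefree).mpr hp₀sq
  obtain ⟨u, v, huv⟩ := hsep
  have hd : (derivative p₀).eval x ≠ 0 := by
    intro hd0
    have := congrArg (Polynomial.eval x) huv
    simp [hp₀x, hd0] at this
  have key : ∀ p : Polynomial ℂ, a ∣ p₀ * derivative p - p * derivative p₀ →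
      p.eval x = 0 := by
    intro p hdvd
    obtain ⟨c, hc⟩ := hdvd
    have := congrArg (Polynomial.eval x) hc
    simp [hp₀x, hax] at this
    rcases this with h | h
    · exact h
    · exact absurd h hd
  exact hnocommon ⟨x, hp₀x, key p₁ h1, key p₂ h2⟩
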